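/- Let α > 0 and t₀ ≤ t_f be real numbers. Let v : ℝ → ℝ be continuous on [t₀, t_f] and differentiable on [t₀, t_f], and let w : ℝ → ℝ satisfy 0 ≤ w(t) ≤ 1 for all t ∈ [t₀, t_f]. Suppose that for every t ∈ [t₀, t_f], if v(t) ≥ w(t)² then v'(t) ≤ -α·v(t). Then for every t ∈ [t₀, t_f], v(t) ≤ max{ e^{-α(t-t₀)}·v(t₀), 1 }. -/

import Mathlib

/-- Scalar comparison form of the attractivity property (Lemma 1):
if `v` satisfies the Lyapunov decrease condition `v' ≤ -α v` whenever `v ≥ w²`,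
with `0 ≤ w ≤ 1`, then `v(t) ≤ max (exp (-α(t-t₀)) v(t₀)) 1` on `[t₀, t_f]`. -/
theorem scalar_attractivity
    (α t₀ t_f : ℝ) (hα : 0 < α) (ht : t₀ ≤ t_f)
    (v v' w : ℝ → ℝ)
    (hv_cont : ContinuousOn v (Set.Icc t₀ t_f))
    (hv_diff : ∀ t ∈ Set.Icc t₀ t_f, HasDerivAt v (v' t) t)
    (hw : ∀ t ∈ Set.Icc t₀ t_f, 0 ≤ w t ∧ w t ≤ 1)
    (hlyap : ∀ t ∈ Set.Icc t₀ t_f, v t ≥ (w t) ^ 2 → v' t ≤ -α * v t) :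
    ∀ t ∈ Set.Icc t₀ t_f,
      v t ≤ max (Real.exp (-α * (t - t₀)) * v t₀) 1 := by
  intro t₁ ht₁
  by_contra hcon
  push_neg at hcon
  obtain ⟨ht₁0, ht₁f⟩ := ht₁
  have hv1 : 1 < v t₁ := lt_of_le_of_lt (le_max_right _ _) hcon
  have hv0 : Real.exp (-α * (t₁ - t₀)) * v t₀ < v t₁ :=
    lt_of_le_of_lt (le_max_left _ _) hcon
  set φ : ℝ → ℝ := fun s => v s * Real.exp (α * s) with hφdef
  have hφdiff : ∀ s ∈ Set.Icc t₀ t_f,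
      HasDerivAt φ ((v' s + α * v s) * Real.exp (α * s)) s := by
    intro s hs
    have hg : HasDerivAt (fun x : ℝ => Real.exp (α * x)) (Real.exp (α * s) * α) s := by
      have := ((hasDerivAt_id s).const_mul α).exp
      simpa [mul_comm] using this
    have h1 : HasDerivAt (fun y => v y * Real.exp (α * y)) _ s := (hv_diff s hs).mul hg
    convert h1 using 1
    ring
  have key : ∀ a b : ℝ, t₀ ≤ a → a ≤ b → b ≤ t_f →
      (∀ s ∈ Set.Ioo a b, 1 ≤ v s) → φ b ≤ φ a := by
    intro a b ha hab hbf hv1'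
    have hsub : Set.Icc a b ⊆ Set.Icc t₀ t_f := Set.Icc_subset_Icc ha hbf
    have hcont : ContinuousOn φ (Set.Icc a b) :=
      (hv_cont.mono hsub).mul
        ((Real.continuous_exp.comp (continuous_const.mul continuous_id)).continuousOn)
    have hanti : AntitoneOn φ (Set.Icc a b) := by
      apply antitoneOn_of_deriv_nonpos (convex_Icc a b) hcont
      · intro x hx
        rw [interior_Icc] at hx
        exact ((hφdiff x (hsub (Set.Ioo_subset_Icc_self hx))).differentiableAt).differentiableWithinAt
      · intro x hx
        rw [interior_Icc] at hx
        have hxI : x ∈ Set.Icc t₀ t_f := hsub (Set.Ioo_subset_Icc_self hx)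
        rw [(hφdiff x hxI).deriv]
        obtain ⟨hw0, hw1⟩ := hw x hxI
        have hw2 : (w x) ^ 2 ≤ 1 := by nlinarith
        have hvx : 1 ≤ v x := hv1' x hx
        have hl := hlyap x hxI (by linarith)
        have hsum : v' x + α * v x ≤ 0 := by linarith
        exact mul_nonpos_of_nonpos_of_nonneg hsum (Real.exp_pos _).le
    exact hanti (Set.left_mem_Icc.mpr hab) (Set.right_mem_Icc.mpr hab) hab
  -- set of times where v ≤ 1
  set S : Set ℝ := Set.Icc t₀ t₁ ∩ v ⁻¹' Set.Iic 1 with hSdef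
  by_cases hS : S.Nonempty
  · -- last crossing time
    have hsubS : Set.Icc t₀ t₁ ⊆ Set.Icc t₀ t_f := Set.Icc_subset_Icc le_rfl ht₁f
    have hSclosed : IsClosed S :=
      ContinuousOn.preimage_isClosed_of_isClosed (hv_cont.mono hsubS)
        isClosed_Icc isClosed_Iic
    have hSbdd : BddAbove S := BddAbove.mono Set.inter_subset_left bddAbove_Icc
    have hs₀S : sSup S ∈ S := hSclosed.csSup_mem hS hSbdd
    set s₀ := sSup S with hs₀def
    obtain ⟨hs₀I, hs₀v⟩ := hs₀S
    have hs₀v : v s₀ ≤ 1 := hs₀v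
    have hs₀lt : s₀ < t₁ := by
      rcases lt_or_eq_of_le hs₀I.2 with h | h
      · exact h
      · exfalso; rw [h] at hs₀v; linarith
    have hgt : ∀ s ∈ Set.Ioo s₀ t₁, 1 ≤ v s := by
      intro s hs
      by_contra hle
      push_neg at hle
      have hsS : s ∈ S := ⟨⟨le_trans hs₀I.1 hs.1.le, hs.2.le⟩, hle.le⟩
      exact absurd (le_csSup hSbdd hsS) (not_le.mpr hs.1)
    have hkey := key s₀ t₁ hs₀I.1 hs₀lt.le ht₁f hgt
    have h1 : φ s₀ ≤ Real.exp (α * s₀) :=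
      mul_le_of_le_one_left (Real.exp_pos _).le hs₀v
    have h2 : Real.exp (α * s₀) ≤ Real.exp (α * t₁) :=
      Real.exp_le_exp.mpr (by nlinarith [hs₀lt.le])
    have h3 : v t₁ * Real.exp (α * t₁) ≤ Real.exp (α * t₁) := le_trans hkey (le_trans h1 h2)
    nlinarith [Real.exp_pos (α * t₁)]
  · -- v > 1 everywhere on [t₀, t₁]
    have hgt : ∀ s ∈ Set.Ioo t₀ t₁, 1 ≤ v s := by
      intro s hs
      by_contra hle
      push_neg at hle
      exact hS ⟨s, ⟨⟨hs.1.le, hs.2.le⟩, hle.le⟩⟩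
    have hkey := key t₀ t₁ le_rfl ht₁0 ht₁f hgt
    -- φ t₁ ≤ φ t₀ gives v t₁ ≤ exp(-α(t₁-t₀)) v t₀
    have hexp : Real.exp (α * t₀) = Real.exp (-α * (t₁ - t₀)) * Real.exp (α * t₁) := by
      rw [← Real.exp_add]; ring_nf
    have : v t₁ * Real.exp (α * t₁) ≤ v t₀ * (Real.exp (-α * (t₁ - t₀)) * Real.exp (α * t₁)) := by
      calc v t₁ * Real.exp (α * t₁) ≤ v t₀ * Real.exp (α * t₀) := hkey
        _ = v t₀ * (Real.exp (-α * (t₁ - t₀)) * Real.exp (α * t₁)) := by rw [hexp]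
    nlinarith [Real.exp_pos (α * t₁)]
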